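/- Let (Ω,F,P) be a probability space, p ∈ (0,1), γ : Ω → ℕ integrable, and T : Ω → ℕ integrable with T ≤ γ pointwise and E[T | σ(γ)] = p·γ almost surely. Define D̄*(ω) = T(ω)/γ(ω) if γ(ω) > 0 and D̄*(ω) = 0 otherwise, and assume D̄*, γ·D̄* are integrable. If P(γ = 0) > 0, P(γ > 0) > 0, and E[γ] > 0, then Cov(D̄*, γ) > 0; in particular, the imputed fraction of treated neighbors is positively correlated with the degree whenever isolated nodes are present with positive probability. -/

import Mathlib

open MeasureTheory ProbabilityTheory

theorem stmt1
    {Ω : Type*} [MeasurableSpace Ω] (P : Measure Ω) [IsProbabilityMeasure P]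
    (p : ℝ) (hp0 : 0 < p) (hp1 : p < 1)
    (γ T : Ω → ℕ) (hγmeas : Measurable γ) (hTmeas : Measurable T)
    (hγint : Integrable (fun ω => (γ ω : ℝ)) P)
    (hTint : Integrable (fun ω => (T ω : ℝ)) P)
    (hTγ : ∀ ω, T ω ≤ γ ω)
    (hcond : P[fun ω => (T ω : ℝ) | MeasurableSpace.comap γ inferInstance]
      =ᵐ[P] fun ω => p * (γ ω : ℝ))
    (Dstar : Ω → ℝ)
    (hDstar : ∀ ω, Dstar ω = if 0 < γ ω then (T ω : ℝ) / (γ ω : ℝ) else 0)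
    (hDint : Integrable Dstar P)
    (hγDint : Integrable (fun ω => (γ ω : ℝ) * Dstar ω) P)
    (hiso : 0 < P {ω | γ ω = 0})
    (hpos : 0 < P {ω | 0 < γ ω})
    (hEγ : 0 < ∫ ω, (γ ω : ℝ) ∂P) :
    0 < (∫ ω, Dstar ω * (γ ω : ℝ) ∂P) - (∫ ω, Dstar ω ∂P) * (∫ ω, (γ ω : ℝ) ∂P) := by
  have hm : MeasurableSpace.comap γ inferInstance ≤ _ := hγmeas.comap_le
  haveI : SigmaFinite (P.trim hm) := IsFiniteMeasure.toSigmaFinite _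
  -- Dstar * γ = T pointwise
  have hDγT : ∀ ω, Dstar ω * (γ ω : ℝ) = (T ω : ℝ) := by
    intro ω
    rw [hDstar ω]
    by_cases h : 0 < γ ω
    · rw [if_pos h, div_mul_cancel₀]
      exact_mod_cast h.ne'
    · rw [if_neg h, zero_mul]
      have h0 : γ ω = 0 := Nat.eq_zero_of_not_pos h
      have := Nat.le_zero.mp (h0 ▸ hTγ ω)
      simp [this]
  -- E[Dstar * γ] = p * E[γ]
  have hET : ∫ ω, (T ω : ℝ) ∂P = p * ∫ ω, (γ ω : ℝ) ∂P := by
    rw [← integral_condExp hm (f := fun ω => (T ω : ℝ)), integral_congr_ae hcond,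
      integral_const_mul]
  have h1 : ∫ ω, Dstar ω * (γ ω : ℝ) ∂P = p * ∫ ω, (γ ω : ℝ) ∂P := by
    rw [← hET]; exact integral_congr_ae (Filter.Eventually.of_forall fun ω => hDγT ω)
  -- g = 1/γ on {γ>0}
  set g0 : ℕ → ℝ := fun n => if 0 < n then (n : ℝ)⁻¹ else 0 with hg0_def
  set g : Ω → ℝ := fun ω => g0 (γ ω) with hg_def
  have hg_meas : StronglyMeasurable[MeasurableSpace.comap γ inferInstance] g := by
    have hγm : Measurable[MeasurableSpace.comap γ inferInstance] γ :=
      Measurable.of_comap_le le_rfl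
    exact ((measurable_from_nat (f := g0)).comp hγm).stronglyMeasurable
  have hgD : ∀ ω, (g * fun ω => (T ω : ℝ)) ω = Dstar ω := by
    intro ω
    simp only [Pi.mul_apply, hg_def, hg0_def, hDstar ω]
    by_cases h : 0 < γ ω
    · rw [if_pos h, if_pos h, inv_mul_eq_div]
    · rw [if_neg h, if_neg h, zero_mul]
  have hgTint : Integrable (g * fun ω => (T ω : ℝ)) P :=
    hDint.congr (Filter.Eventually.of_forall fun ω => (hgD ω).symm)
  have hpull := condExp_mul_of_stronglyMeasurable_left hg_meas hgTint hTint
  -- E[Dstar] = p * P(γ>0)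
  have hED : ∫ ω, Dstar ω ∂P = p * (P {ω | 0 < γ ω}).toReal := by
    have e1 : ∫ ω, Dstar ω ∂P = ∫ ω, (g * fun ω => (T ω : ℝ)) ω ∂P :=
      integral_congr_ae (Filter.Eventually.of_forall fun ω => (hgD ω).symm)
    rw [e1, ← integral_condExp hm (f := g * fun ω => (T ω : ℝ)),
      integral_congr_ae hpull]
    have e2 : (fun ω => (g * P[fun ω => (T ω : ℝ)|MeasurableSpace.comap γ inferInstance]) ω)
        =ᵐ[P] fun ω => p * Set.indicator {ω | 0 < γ ω} (1 : Ω → ℝ) ω := by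
      filter_upwards [hcond] with ω hω
      simp only [Pi.mul_apply, hω, hg_def, hg0_def]
      by_cases h : 0 < γ ω
      · have hmem : ω ∈ {ω | 0 < γ ω} := h
        rw [Set.indicator_of_mem hmem, Pi.one_apply, if_pos h, mul_one]
        rw [← mul_assoc, mul_comm ((γ ω : ℝ))⁻¹ p, mul_assoc,
          inv_mul_cancel₀ (by exact_mod_cast h.ne'), mul_one]
      · have hmem : ω ∉ {ω | 0 < γ ω} := h
        rw [Set.indicator_of_notMem hmem, if_neg h, zero_mul, mul_zero]
    rw [integral_congr_ae e2, integral_const_mul,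
      integral_indicator_one (measurableSet_lt measurable_const hγmeas), Measure.real_def]
  -- P(γ>0) < 1
  have hc1 : (P {ω | 0 < γ ω}).toReal < 1 := by
    have hcompl : {ω | 0 < γ ω} = {ω | γ ω = 0}ᶜ := by
      ext ω; simp [Nat.pos_iff_ne_zero]
    have hmeas0 : MeasurableSet {ω | γ ω = 0} := hγmeas (measurableSet_singleton 0)
    have hP : P {ω | 0 < γ ω} = 1 - P {ω | γ ω = 0} := by
      rw [hcompl, measure_compl hmeas0 (measure_ne_top P _), measure_univ]
    rw [hP]
    have h0 : P {ω | γ ω = 0} ≤ 1 := prob_le_one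
    have htr : (1 - P {ω | γ ω = 0}).toReal = 1 - (P {ω | γ ω = 0}).toReal := by
      rw [ENNReal.toReal_sub_of_le h0 ENNReal.one_ne_top, ENNReal.toReal_one]
    rw [htr]
    have : 0 < (P {ω | γ ω = 0}).toReal :=
      ENNReal.toReal_pos hiso.ne' (measure_ne_top P _)
    linarith
  have hc0 : 0 ≤ (P {ω | 0 < γ ω}).toReal := ENNReal.toReal_nonneg
  rw [h1, hED]
  nlinarith [mul_pos (mul_pos hp0 (sub_pos.mpr hc1)) hEγ]
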